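/- Let x : ℝ → ℝⁿ be a polynomial curve (each coordinate a polynomial in s) such that ‖x'(s)‖² = 1 for all s ∈ ℝ. Then x is affine: x(s) = a₁ s + a₀ with ‖a₁‖ = 1. -/

import Mathlib

open Polynomial Filter
theorem unit_speed_polynomial_curve_is_affine
    (n d : ℕ) (a : ℕ → EuclideanSpace ℝ (Fin n))
    (x : ℝ → EuclideanSpace ℝ (Fin n))
    (hx : ∀ s : ℝ, x s = ∑ i ∈ Finset.range (d + 1), s ^ i • a i)
    (hunit : ∀ s : ℝ, (inner ℝ (deriv x s) (deriv x s) : ℝ) = 1) :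
    ∃ (a₀ a₁ : EuclideanSpace ℝ (Fin n)), ‖a₁‖ = 1 ∧
      ∀ s : ℝ, x s = s • a₁ + a₀ := by
  have hxf : x = fun s => ∑ i ∈ Finset.range (d + 1), s ^ i • a i := funext hx
  have hderiv : ∀ s : ℝ, HasDerivAt x
      (∑ i ∈ Finset.range (d + 1), ((i : ℝ) * s ^ (i - 1)) • a i) s := by
    intro s
    rw [hxf]
    exact HasDerivAt.fun_sum fun i _ => (hasDerivAt_pow i s).smul_const (a i)
  have hdx : ∀ s : ℝ, deriv x s
      = ∑ i ∈ Finset.range (d + 1), ((i : ℝ) * s ^ (i - 1)) • a i :=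
    fun s => (hderiv s).deriv
  -- norm of derivative is 1
  have hnorm : ∀ s : ℝ, ‖deriv x s‖ = 1 := by
    intro s
    have := hunit s
    rw [real_inner_self_eq_norm_mul_norm] at this
    nlinarith [norm_nonneg (deriv x s)]
  -- each coordinate of deriv x is a bounded polynomial, hence constant
  have hconst : ∀ s : ℝ, deriv x s = deriv x 0 := by
    intro s
    ext k
    set p : Polynomial ℝ :=
      ∑ i ∈ Finset.range (d + 1), C ((i : ℝ) * a i k) * X ^ (i - 1) with hp
    have heval : ∀ t : ℝ, p.eval t = deriv x t k := by
      intro t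
      have hsum : (∑ i ∈ Finset.range (d + 1), ((i : ℝ) * t ^ (i - 1)) • a i) k
          = ∑ i ∈ Finset.range (d + 1), ((i : ℝ) * t ^ (i - 1)) * a i k :=
        by simp only [WithLp.ofLp_sum, Finset.sum_apply, PiLp.smul_apply, smul_eq_mul]
      rw [hdx t, hp, eval_finset_sum, hsum]
      simp only [eval_mul, eval_C, eval_pow, eval_X]
      exact Finset.sum_congr rfl fun i _ => by ring
    have hbdd : ∀ t : ℝ, |p.eval t| ≤ 1 := by
      intro t
      rw [heval t]
      have h1 : |deriv x t k| = |inner ℝ (deriv x t) (EuclideanSpace.single k (1:ℝ))| := by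
        rw [EuclideanSpace.inner_single_right]
        simp [RCLike.inner_apply]
      rw [h1]
      calc |inner ℝ (deriv x t) (EuclideanSpace.single k (1:ℝ))|
          ≤ ‖deriv x t‖ * ‖EuclideanSpace.single k (1:ℝ)‖ := abs_real_inner_le_norm _ _
        _ = 1 := by rw [hnorm, EuclideanSpace.norm_single]; simp
    have hdeg : p.degree ≤ 0 := by
      rw [← Polynomial.abs_isBoundedUnder_iff]
      exact ⟨1, eventually_map.mpr (Eventually.of_forall fun t => hbdd t)⟩
    have hc := Polynomial.eq_C_of_degree_le_zero hdeg
    have h0 : p.eval s = p.eval 0 := by rw [hc]; simp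
    rw [heval s, heval 0] at h0
    exact h0
  refine ⟨x 0, deriv x 0, ?_, ?_⟩
  · have := hunit 0
    rw [real_inner_self_eq_norm_mul_norm] at this
    nlinarith [norm_nonneg (deriv x 0)]
  · intro s
    have hdiff : Differentiable ℝ x := fun s => (hderiv s).differentiableAt
    have hg : ∀ t : ℝ, deriv (fun t => x t - t • deriv x 0) t = 0 := by
      intro t
      have h1 : HasDerivAt (fun t => x t - t • deriv x 0)
          (deriv x t - deriv x 0) t := by
        have h2 : HasDerivAt (fun t : ℝ => t • deriv x 0) (deriv x 0) t := by
          simpa using (hasDerivAt_id t).smul_const (deriv x 0)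
        exact ((hderiv t).sub h2).congr_deriv (by rw [hdx t])
      rw [h1.deriv, hconst t, sub_self]
    have hgd : Differentiable ℝ (fun t => x t - t • deriv x 0) := by
      intro t
      exact (hdiff t).sub ((differentiable_id.smul_const (deriv x 0)) t)
    have := is_const_of_deriv_eq_zero hgd hg s 0
    simp only [zero_smul, sub_zero] at this
    rw [← this]
    abel
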